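/- Let 0 < p < 1/2, let (U^n,V^n) ~ DSBS(p)^⊗n on {0,1}^n × {0,1}^n, and let f,g : {0,1}^n → {0,1}^n be functions such that (X^n,Y^n) = (f(U^n), g(V^n)) has joint pmf exactly DSBS(p)^⊗n. Then f = g, and f is a signed coordinate permutation: there exist a permutation σ of {1,…,n} and b ∈ {0,1}^n such that f(u^n)_i = u_{σ(i)} ⊕ b_i for all u^n and all i. -/

import Mathlib

open Finset

/-- The pmf of one DSBS(p) pair on `{0,1}` (encoded by `Bool`). -/
noncomputable def dsbsPair (p : ℝ) (uv : Bool × Bool) : ℝ :=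
  if uv.1 = uv.2 then (1 - p) / 2 else p / 2



section Aux
variable {n : ℕ}

/-- indicator vector at a coordinate -/
def evec (j : Fin n) : Fin n → Bool := fun k => decide (k = j)

lemma hammingDist_eq_sum (a b : Fin n → Bool) :
    hammingDist a b = ∑ k, if a k = b k then 0 else 1 := by
  show (univ.filter fun i => a i ≠ b i).card = _
  rw [Finset.card_filter]
  exact Finset.sum_congr rfl fun k _ => by by_cases hk : a k = b k <;> simp [hk]

lemma mem_iff_dist_lt (a : Fin n → Bool) (j : Fin n) :
    a j = true ↔ hammingDist a (evec j) < hammingDist a (fun _ => false) := by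
  rw [hammingDist_eq_sum, hammingDist_eq_sum]
  rw [← Finset.sum_erase_add _ _ (Finset.mem_univ j),
      ← Finset.sum_erase_add _ _ (Finset.mem_univ j)]
  have hS : ∑ k ∈ univ.erase j, (if a k = evec j k then (0:ℕ) else 1)
      = ∑ k ∈ univ.erase j, (if a k = false then (0:ℕ) else 1) := by
    refine Finset.sum_congr rfl fun k hk => ?_
    have hkj : k ≠ j := (Finset.mem_erase.mp hk).1
    have : evec j k = false := by simp [evec, hkj]
    rw [this]
  rw [hS]
  have hjj : evec j j = true := by simp [evec]
  rw [hjj]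
  cases haj : a j <;> simp

lemma evec_wt (j : Fin n) : hammingDist (evec j) (fun _ => false) = 1 := by
  show (univ.filter fun k => evec j k ≠ false).card = 1
  have : (univ.filter fun k => evec j k ≠ false) = {j} := by
    ext k; simp [evec]
  rw [this, Finset.card_singleton]

lemma wt_one_eq_evec (v : Fin n → Bool) (h : hammingDist v (fun _ => false) = 1) :
    ∃ j, v = evec j := by
  have h' : (univ.filter fun k => v k ≠ false).card = 1 := h
  obtain ⟨j, hj⟩ := Finset.card_eq_one.mp h'
  refine ⟨j, funext fun k => ?_⟩
  have hk : v k ≠ false ↔ k = j := by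
    constructor
    · intro hv
      have : k ∈ univ.filter fun k => v k ≠ false := by simp [hv]
      rw [hj] at this; simpa using this
    · intro hkj
      have : j ∈ univ.filter fun k => v k ≠ false := by rw [hj]; simp
      subst hkj; simpa using this
  by_cases hkj : k = j
  · subst hkj
    have hv : v k = true := by
      have := hk.mpr rfl
      exact Bool.not_eq_false _ ▸ (by simpa using this)
    simp [evec, hv]
  · have : v k = false := by
      by_contra hv; exact hkj (hk.mp (by simpa using hv))
    simp [evec, hkj, this]

lemma iso_classify (F : (Fin n → Bool) → (Fin n → Bool))
    (hF : ∀ x y, hammingDist (F x) (F y) = hammingDist x y)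
    (hF0 : F (fun _ => false) = fun _ => false) :
    ∃ τ : Fin n → Fin n, Function.Injective τ ∧ ∀ x i, F x (τ i) = x i := by
  have hw : ∀ x, hammingDist (F x) (fun _ => false) = hammingDist x (fun _ => false) := by
    intro x
    have := hF x (fun _ => false)
    rwa [hF0] at this
  choose τ hτ using fun i => wt_one_eq_evec (F (evec i)) (by rw [hw, evec_wt])
  refine ⟨τ, ?_, ?_⟩
  · intro i i' hii
    have hFe : F (evec i) = F (evec i') := by rw [hτ, hτ, hii]
    have h0 : hammingDist (evec i) (evec i') = 0 := by
      rw [← hF, hFe, hammingDist_self]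
    have he := hammingDist_eq_zero.mp h0
    by_contra hne
    have := congrFun he i
    simp [evec, hne] at this
  · intro x i
    have h1 : hammingDist (F x) (evec (τ i)) = hammingDist x (evec i) := by
      rw [← hτ, hF]
    have h2 := hw x
    have hiff : F x (τ i) = true ↔ x i = true := by
      rw [mem_iff_dist_lt (F x) (τ i), h1, h2, ← mem_iff_dist_lt x i]
    cases h1 : F x (τ i) <;> cases h2 : x i <;> simp_all

end Aux


section Aux2
variable {n : ℕ} {p : ℝ}

lemma dsbs_comm (p : ℝ) (a b : Bool) : dsbsPair p (a, b) = dsbsPair p (b, a) := by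
  cases a <;> cases b <;> rfl

lemma sum_dsbs (p : ℝ) (a : Bool) : ∑ b : Bool, dsbsPair p (a, b) = 1 / 2 := by
  cases a <;> simp [dsbsPair] <;> ring

lemma sum_prod_dsbs (p : ℝ) (u : Fin n → Bool) :
    ∑ v : Fin n → Bool, ∏ i, dsbsPair p (u i, v i) = (1 / 2) ^ n := by
  have h1 := Finset.prod_univ_sum (fun _ : Fin n => (univ : Finset Bool))
    (fun i b => dsbsPair p (u i, b))
  rw [Fintype.piFinset_univ] at h1
  rw [← h1]
  calc ∏ i : Fin n, ∑ b ∈ (univ : Finset Bool), dsbsPair p (u i, b)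
      = ∏ _i : Fin n, (1 / 2 : ℝ) := Finset.prod_congr rfl fun i _ => sum_dsbs p (u i)
    _ = (1 / 2) ^ n := by simp

lemma prod_dsbs_eq (p : ℝ) (a b : Fin n → Bool) :
    ∏ i, dsbsPair p (a i, b i)
      = ((1 - p) / 2) ^ (n - hammingDist a b) * (p / 2) ^ (hammingDist a b) := by
  unfold dsbsPair
  rw [Finset.prod_ite]
  simp only [Finset.prod_const]
  have h1 : (univ.filter fun i => ¬ a i = b i).card = hammingDist a b := rfl
  have h2 : (univ.filter fun i => a i = b i).card = n - hammingDist a b := by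
    have := Finset.card_filter_add_card_filter_not (s := (univ : Finset (Fin n)))
      (fun i => a i = b i)
    simp only [Finset.card_univ, Fintype.card_fin] at this
    omega
  rw [h1, h2]

lemma ham_of_prod_eq (hp0 : 0 < p) (hp : p < 1 / 2) (a b c d : Fin n → Bool)
    (h : ∏ i, dsbsPair p (a i, b i) = ∏ i, dsbsPair p (c i, d i)) :
    hammingDist a b = hammingDist c d := by
  rw [prod_dsbs_eq, prod_dsbs_eq] at h
  set q : ℝ := (1 - p) / 2 with hq
  set r : ℝ := p / 2 with hr
  have hrpos : 0 < r := by positivity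
  have hrq : r < q := by rw [hq, hr]; linarith
  have key : ∀ d1 d2 : ℕ, d1 < d2 → d2 ≤ n →
      q ^ (n - d2) * r ^ d2 < q ^ (n - d1) * r ^ d1 := by
    intro d1 d2 h12 h2n
    have hqpos : 0 < q := lt_trans hrpos hrq
    calc q ^ (n - d2) * r ^ d2
        = q ^ (n - d2) * r ^ d1 * r ^ (d2 - d1) := by
          rw [mul_assoc, ← pow_add]; congr 2; omega
      _ < q ^ (n - d2) * r ^ d1 * q ^ (d2 - d1) := by
          apply mul_lt_mul_of_pos_left (pow_lt_pow_left₀ hrq hrpos.le (by omega))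
          positivity
      _ = q ^ (n - d1) * r ^ d1 := by
          rw [mul_right_comm, ← pow_add]
          congr 2
          omega
  have hab : hammingDist a b ≤ n := by
    have := hammingDist_le_card_fintype (x := a) (y := b); simpa using this
  have hcd : hammingDist c d ≤ n := by
    have := hammingDist_le_card_fintype (x := c) (y := d); simpa using this
  rcases lt_trichotomy (hammingDist a b) (hammingDist c d) with hlt | heq | hgt
  · exact absurd h (ne_of_gt (key _ _ hlt hcd))
  · exact heq
  · exact absurd h (ne_of_lt (key _ _ hgt hab))

lemma bij_of_fibers {α β : Type*} [Fintype α] [DecidableEq α] [DecidableEq β] (f : α → β)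
    (h : ∀ x, (univ.filter fun u => f u = x).card = 1) : Function.Bijective f := by
  constructor
  · intro a b hab
    obtain ⟨c, hc⟩ := Finset.card_eq_one.mp (h (f b))
    have ha : a ∈ univ.filter fun u => f u = f b := by simp [hab]
    have hb : b ∈ univ.filter fun u => f u = f b := by simp
    rw [hc, Finset.mem_singleton] at ha hb
    rw [ha, hb]
  · intro x
    have hpos : 0 < (univ.filter fun u => f u = x).card := by rw [h]; norm_num
    obtain ⟨u, hu⟩ := Finset.card_pos.mp hpos
    exact ⟨u, (Finset.mem_filter.mp hu).2⟩

end Aux2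

section Aux3
variable {n : ℕ}

lemma fiber_card (p : ℝ) (n : ℕ)
    (f g : (Fin n → Bool) → (Fin n → Bool))
    (h : ∀ x y : Fin n → Bool,
      (∑ u : Fin n → Bool, ∑ v : Fin n → Bool,
          (∏ i, dsbsPair p (u i, v i)) * (if f u = x then (1:ℝ) else 0) *
            (if g v = y then (1:ℝ) else 0))
        = ∏ i, dsbsPair p (x i, y i)) (x : Fin n → Bool) :
    (univ.filter fun u => f u = x).card = 1 := by
  have hsum := sum_prod_dsbs (n := n) p
  have hkey : ∑ y : Fin n → Bool, (∑ u : Fin n → Bool, ∑ v : Fin n → Bool,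
      (∏ i, dsbsPair p (u i, v i)) * (if f u = x then (1:ℝ) else 0) *
        (if g v = y then (1:ℝ) else 0))
      = ∑ y : Fin n → Bool, ∏ i, dsbsPair p (x i, y i) :=
    Finset.sum_congr rfl fun y _ => h x y
  have hR : ∑ y : Fin n → Bool, ∏ i, dsbsPair p (x i, y i) = (1/2)^n := hsum x
  have step : ∀ u v : Fin n → Bool,
      ∑ y : Fin n → Bool, (∏ i, dsbsPair p (u i, v i)) * (if f u = x then (1:ℝ) else 0) *
        (if g v = y then (1:ℝ) else 0)
      = (∏ i, dsbsPair p (u i, v i)) * (if f u = x then (1:ℝ) else 0) := by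
    intro u v
    rw [← Finset.mul_sum, Finset.sum_ite_eq]
    simp
  have hL : ∑ y : Fin n → Bool, (∑ u : Fin n → Bool, ∑ v : Fin n → Bool,
      (∏ i, dsbsPair p (u i, v i)) * (if f u = x then (1:ℝ) else 0) *
        (if g v = y then (1:ℝ) else 0))
      = (1/2)^n * ((univ.filter fun u => f u = x).card : ℝ) := by
    rw [Finset.sum_comm]
    calc ∑ u : Fin n → Bool, ∑ y : Fin n → Bool, ∑ v : Fin n → Bool,
          (∏ i, dsbsPair p (u i, v i)) * (if f u = x then (1:ℝ) else 0) *
            (if g v = y then (1:ℝ) else 0)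
        = ∑ u : Fin n → Bool, ∑ v : Fin n → Bool, ∑ y : Fin n → Bool,
          (∏ i, dsbsPair p (u i, v i)) * (if f u = x then (1:ℝ) else 0) *
            (if g v = y then (1:ℝ) else 0) :=
          Finset.sum_congr rfl fun u _ => Finset.sum_comm
      _ = ∑ u : Fin n → Bool, ∑ v : Fin n → Bool,
          (∏ i, dsbsPair p (u i, v i)) * (if f u = x then (1:ℝ) else 0) :=
          Finset.sum_congr rfl fun u _ => Finset.sum_congr rfl fun v _ => step u v
      _ = ∑ u : Fin n → Bool, (1/2)^n * (if f u = x then (1:ℝ) else 0) := by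
          refine Finset.sum_congr rfl fun u _ => ?_
          rw [← Finset.sum_mul, hsum u]
      _ = (1/2)^n * ∑ u : Fin n → Bool, (if f u = x then (1:ℝ) else 0) := by
          rw [Finset.mul_sum]
      _ = (1/2)^n * ((univ.filter fun u => f u = x).card : ℝ) := by
          rw [Finset.sum_boole]
  rw [hL, hR] at hkey
  have hne : ((1:ℝ)/2)^n ≠ 0 := by positivity
  field_simp at hkey
  exact_mod_cast hkey

end Aux3

/-- if `(f(U^n), g(V^n))` is distributed exactly as `DSBS(p)^{⊗n}` when
`(U^n,V^n) ~ DSBS(p)^{⊗n}` with `0 < p < 1/2`, then `f = g` and `f` is a signed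
coordinate permutation. -/
theorem stmt7 (p : ℝ) (hp0 : 0 < p) (hp : p < 1 / 2) (n : ℕ)
    (f g : (Fin n → Bool) → (Fin n → Bool))
    (h : ∀ x y : Fin n → Bool,
      (∑ u : Fin n → Bool, ∑ v : Fin n → Bool,
          (∏ i, dsbsPair p (u i, v i)) * (if f u = x then (1:ℝ) else 0) *
            (if g v = y then (1:ℝ) else 0))
        = ∏ i, dsbsPair p (x i, y i)) :
    f = g ∧ ∃ (σ : Equiv.Perm (Fin n)) (b : Fin n → Bool),
      ∀ (u : Fin n → Bool) (i : Fin n), f u i = xor (u (σ i)) (b i) := by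
    -- swapped hypothesis for g
  have hswap : ∀ x y : Fin n → Bool,
      (∑ u : Fin n → Bool, ∑ v : Fin n → Bool,
          (∏ i, dsbsPair p (u i, v i)) * (if g u = x then (1:ℝ) else 0) *
            (if f v = y then (1:ℝ) else 0))
        = ∏ i, dsbsPair p (x i, y i) := by
    intro x y
    have hyx := h y x
    rw [Finset.sum_comm] at hyx
    calc (∑ u : Fin n → Bool, ∑ v : Fin n → Bool,
          (∏ i, dsbsPair p (u i, v i)) * (if g u = x then (1:ℝ) else 0) *
            (if f v = y then (1:ℝ) else 0))
        = ∑ u : Fin n → Bool, ∑ v : Fin n → Bool,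
          (∏ i, dsbsPair p (v i, u i)) * (if f v = y then (1:ℝ) else 0) *
            (if g u = x then (1:ℝ) else 0) := by
          refine Finset.sum_congr rfl fun u _ => Finset.sum_congr rfl fun v _ => ?_
          rw [Finset.prod_congr rfl fun i _ => dsbs_comm p (u i) (v i)]
          ring
      _ = ∏ i, dsbsPair p (y i, x i) := hyx
      _ = ∏ i, dsbsPair p (x i, y i) :=
          Finset.prod_congr rfl fun i _ => dsbs_comm p (y i) (x i)
  -- bijectivity
  have hfb : Function.Bijective f := bij_of_fibers f (fiber_card p n f g h)
  have hgb : Function.Bijective g := bij_of_fibers g (fiber_card p n g f hswap)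
  let ef : (Fin n → Bool) ≃ (Fin n → Bool) := Equiv.ofBijective f hfb
  let eg : (Fin n → Bool) ≃ (Fin n → Bool) := Equiv.ofBijective g hgb
  -- collapse the double sum
  have hcol : ∀ x y : Fin n → Bool,
      ∏ i, dsbsPair p (ef.symm x i, eg.symm y i) = ∏ i, dsbsPair p (x i, y i) := by
    intro x y
    have hxy := h x y
    have e1 : ∀ u : Fin n → Bool, (f u = x) = (u = ef.symm x) := fun u =>
      propext (Equiv.apply_eq_iff_eq_symm_apply ef)
    have e2 : ∀ v : Fin n → Bool, (g v = y) = (v = eg.symm y) := fun v =>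
      propext (Equiv.apply_eq_iff_eq_symm_apply eg)
    rw [← hxy]
    simp only [e1, e2, mul_ite, mul_one, mul_zero, ite_mul, zero_mul,
      Finset.sum_ite_eq', Finset.mem_univ, if_true]
  -- hamming preservation by the inverses
  have hham : ∀ x y : Fin n → Bool,
      hammingDist (ef.symm x) (eg.symm y) = hammingDist x y :=
    fun x y => ham_of_prod_eq hp0 hp _ _ _ _ (hcol x y)
  -- f = g
  have hFG : ∀ x : Fin n → Bool, ef.symm x = eg.symm x := by
    intro x
    have h0 : hammingDist (ef.symm x) (eg.symm x) = 0 := by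
      rw [hham, hammingDist_self]
    exact hammingDist_eq_zero.mp h0
  have hfg : f = g := by
    funext u
    have h1 : eg.symm (f u) = u := by
      rw [← hFG]; exact ef.symm_apply_apply u
    calc f u = eg (eg.symm (f u)) := (eg.apply_symm_apply _).symm
      _ = eg u := by rw [h1]
      _ = g u := rfl
  -- f is a hamming isometry
  have hiso : ∀ a b : Fin n → Bool, hammingDist (f a) (f b) = hammingDist a b := by
    intro a b
    have h2 := hham (f a) (g b)
    rw [show ef.symm (f a) = a from ef.symm_apply_apply a,
        show eg.symm (g b) = b from eg.symm_apply_apply b] at h2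
    rw [← hfg] at h2
    exact h2.symm
  -- classification
  set b0 : Fin n → Bool := f (fun _ => false) with hb0
  set F0 : (Fin n → Bool) → (Fin n → Bool) := fun x j => xor (f x j) (b0 j) with hF0def
  have hF0iso : ∀ x y, hammingDist (F0 x) (F0 y) = hammingDist x y := by
    intro x y
    rw [← hiso x y]
    show (univ.filter fun j => F0 x j ≠ F0 y j).card
      = (univ.filter fun j => f x j ≠ f y j).card
    congr 1
    apply Finset.filter_congr
    intro j _
    simp only [F0]
    cases f x j <;> cases f y j <;> cases b0 j <;> simp
  have hF00 : F0 (fun _ => false) = fun _ => false := by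
    funext j
    simp [F0, b0]
  obtain ⟨τ, hτinj, hτ⟩ := iso_classify F0 hF0iso hF00
  have hτbij : Function.Bijective τ := Finite.injective_iff_bijective.mp hτinj
  let e : Equiv.Perm (Fin n) := Equiv.ofBijective τ hτbij
  refine ⟨hfg, e.symm, b0, ?_⟩
  intro u i
  have hmain := hτ u (e.symm i)
  rw [show τ (e.symm i) = i from e.apply_symm_apply i] at hmain
  -- hmain : F0 u i = u (e.symm i), i.e. xor (f u i) (b0 i) = u (e.symm i)
  have hx : xor (f u i) (b0 i) = u (e.symm i) := hmain
  rw [← hx, Bool.xor_assoc, Bool.xor_self, Bool.xor_false]
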